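/- Assume 0 < ε ≤ 1/2 and C > 0, and set M = 1 + (4(2 + ε)/ε²)(C + log 8). Let R_1, …, R_d be independent random variables, each distributed according to the geometric distribution Geom(1/2) on the nonnegative integers, and define S_i = |{j ∈ {1,…,d} : R_j ≥ i}|. Let ℓ ≥ 2 be an integer such that M·2^{ℓ−1} ≤ d < M·2^{ℓ}. Then P(S_{ℓ−2} ≤ M) < (1/8)·e^{−C}. -/

import Mathlib

open MeasureTheory ProbabilityTheory

/-- `Scnt R i` is the number of indices `j` with `R j ≥ i` (an integer index
`i ≤ 0` is satisfied by every entry). -/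
def Scnt {d : ℕ} (R : Fin d → ℕ) (i : ℤ) : ℕ :=
  (Finset.univ.filter fun j : Fin d => i ≤ (R j : ℤ)).card

/-- `Tcnt R i` is the number of indices `j` other than the first one with
`R j ≥ i`. -/
def Tcnt {d : ℕ} (R : Fin d → ℕ) (i : ℤ) : ℕ :=
  (Finset.univ.filter fun j : Fin d => i ≤ (R j : ℤ) ∧ 0 < (j : ℕ)).card

lemma tail_geom {Ω : Type*} [MeasureSpace Ω] [IsProbabilityMeasure (ℙ : Measure Ω)]
    (X : Ω → ℕ) (hX : Measurable X)
    (hgeom : ∀ i : ℕ, ℙ {ω | X ω = i} = (2 : ENNReal)⁻¹ ^ (i + 1)) :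
    ∀ k : ℕ, ℙ {ω | k ≤ X ω} = (2 : ENNReal)⁻¹ ^ k := by
  intro k
  induction k with
  | zero => simp
  | succ k ih =>
    have hsplit : {ω | k ≤ X ω} = {ω | X ω = k} ∪ {ω | k + 1 ≤ X ω} := by
      ext ω; simp only [Set.mem_setOf_eq, Set.mem_union]; omega
    have hdisj : Disjoint {ω | X ω = k} {ω | k + 1 ≤ X ω} := by
      rw [Set.disjoint_left]; intro ω h1 h2; simp only [Set.mem_setOf_eq] at h1 h2; omega
    have hm : MeasurableSet {ω | k + 1 ≤ X ω} := hX measurableSet_Ici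
    have := measure_union (μ := ℙ) hdisj hm
    rw [← hsplit, ih, hgeom] at this
    have h2 : (2 : ENNReal)⁻¹ ^ k = (2:ENNReal)⁻¹ ^ (k+1) + (2:ENNReal)⁻¹^(k+1) := by
      rw [pow_succ]
      rw [← mul_two, mul_assoc, ENNReal.inv_mul_cancel (by norm_num) (by norm_num), mul_one]
    rw [h2] at this
    exact ((ENNReal.add_right_inj (a := (2:ENNReal)⁻¹ ^ (k+1))
      (by exact ENNReal.pow_ne_top (by norm_num))).mp this).symm

lemma exp_ind_eq {Ω : Type*} (A : Set Ω) (t : ℝ) :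
    (fun ω => Real.exp (t * A.indicator (fun _ => (1:ℝ)) ω))
      = fun ω => (Real.exp t - 1) * A.indicator (fun _ => (1:ℝ)) ω + 1 := by
  funext ω
  by_cases h : ω ∈ A
  · simp [Set.indicator_of_mem h]
  · simp [Set.indicator_of_notMem h]

lemma ind_integrable {Ω : Type*} [MeasureSpace Ω] [IsProbabilityMeasure (ℙ : Measure Ω)]
    {A : Set Ω} (hA : MeasurableSet A) (t : ℝ) :
    Integrable (fun ω => Real.exp (t * A.indicator (fun _ => (1:ℝ)) ω)) ℙ := by
  rw [exp_ind_eq]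
  exact (((integrable_const (1:ℝ)).indicator hA).const_mul _).add (integrable_const 1)

lemma ind_mgf {Ω : Type*} [MeasureSpace Ω] [IsProbabilityMeasure (ℙ : Measure Ω)]
    {A : Set Ω} (hA : MeasurableSet A) (t : ℝ) :
    mgf (A.indicator (fun _ => (1:ℝ))) ℙ t = 1 + (Real.exp t - 1) * (ℙ A).toReal := by
  unfold mgf
  rw [exp_ind_eq]
  rw [integral_add ((((integrable_const (1:ℝ)).indicator hA).const_mul _)) (integrable_const 1),
    MeasureTheory.integral_const_mul, MeasureTheory.integral_indicator_const _ hA]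
  simp [mul_comm, measureReal_def]
  ring

theorem Scount_low_tail_bound {Ω : Type*} [MeasureSpace Ω]
    [IsProbabilityMeasure (ℙ : Measure Ω)]
    (ε C : ℝ) (hε : 0 < ε) (hε' : ε ≤ 1 / 2) (hC : 0 < C)
    (M : ℝ) (hM : M = 1 + 4 * (2 + ε) / ε ^ 2 * (C + Real.log 8))
    (d : ℕ) (R : Fin d → Ω → ℕ)
    (hmeas : ∀ j, Measurable (R j))
    (hindep : iIndepFun R ℙ)
    (hgeom : ∀ j (i : ℕ), ℙ {ω | R j ω = i} = (2 : ENNReal)⁻¹ ^ (i + 1))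
    (ℓ : ℤ) (hℓ : 2 ≤ ℓ)
    (hℓ₁ : M * 2 ^ (ℓ - 1) ≤ (d : ℝ)) (hℓ₂ : (d : ℝ) < M * 2 ^ ℓ)  :
    ℙ {ω | (Scnt (fun j => R j ω) (ℓ - 2) : ℝ) ≤ M} <
      ENNReal.ofReal (1 / 8 * Real.exp (-C)) := by
  -- basic log facts
  have hlog2pos : 0 < Real.log 2 := Real.log_pos (by norm_num)
  have hlog2lt : Real.log 2 < 0.6931471808 := Real.log_two_lt_d9
  have hlog8 : Real.log 8 = 3 * Real.log 2 := by
    rw [show (8:ℝ) = 2^3 by norm_num, Real.log_pow]; push_cast; ring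
  have hlog8pos : 0 < Real.log 8 := by rw [hlog8]; linarith
  have hMlb : 1 + 32 * (C + Real.log 8) ≤ M := by
    rw [hM]
    have hε2 : 0 < ε ^ 2 := by positivity
    have h32 : 32 ≤ 4 * (2 + ε) / ε ^ 2 := by
      rw [le_div_iff₀ hε2]; nlinarith
    nlinarith [mul_le_mul_of_nonneg_right h32 (by linarith : (0:ℝ) ≤ C + Real.log 8)]
  have hMpos : 0 < M := by nlinarith
  -- set up k, p
  obtain ⟨k, hk⟩ : ∃ k : ℕ, (k : ℤ) = ℓ - 2 := ⟨(ℓ - 2).toNat, by omega⟩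
  set p : ℝ := (1/2 : ℝ) ^ k with hp
  have hp0 : 0 < p := by positivity
  have hp1 : p ≤ 1 := pow_le_one₀ (by norm_num) (by norm_num)
  -- the indicator random variables
  set A : Fin d → Set Ω := fun j => {ω | k ≤ R j ω} with hA
  have hAm : ∀ j, MeasurableSet (A j) := fun j => (hmeas j) measurableSet_Ici
  have hAP : ∀ j, ℙ (A j) = (2 : ENNReal)⁻¹ ^ k := fun j =>
    tail_geom (R j) (hmeas j) (hgeom j) k
  have hAPr : ∀ j, (ℙ (A j)).toReal = p := by
    intro j
    rw [hAP j, hp]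
    simp [ENNReal.toReal_pow]
  set X : Fin d → Ω → ℝ := fun j => (A j).indicator (fun _ => (1:ℝ)) with hX
  have hXmeas : ∀ j, Measurable (X j) := fun j => measurable_const.indicator (hAm j)
  have hXindep : iIndepFun X ℙ := by
    have : X = fun j => (fun n : ℕ => (Set.Ici k).indicator (fun _ => (1:ℝ)) n) ∘ (R j) := by
      funext j ω
      simp only [hX, Function.comp_apply, Set.indicator_apply]
      rfl
    rw [this]
    exact hindep.comp _ (fun j => measurable_from_top)
  -- the choice of t
  set t : ℝ := -Real.log 2 with ht
  have htle : t ≤ 0 := by rw [ht]; linarith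
  have hexpt : Real.exp t = 1/2 := by
    rw [ht, Real.exp_neg, Real.exp_log (by norm_num)]
    norm_num
  -- identify the event
  have hset : {ω | (Scnt (fun j => R j ω) (ℓ - 2) : ℝ) ≤ M}
      = {ω | (∑ j, X j) ω ≤ M} := by
    ext ω
    simp only [Set.mem_setOf_eq, Finset.sum_apply]
    have : (Scnt (fun j => R j ω) (ℓ - 2) : ℝ) = ∑ j, X j ω := by
      unfold Scnt
      rw [Finset.card_filter]
      push_cast
      refine Finset.sum_congr rfl fun j _ => ?_
      have hcond : (ℓ - 2 ≤ ((R j ω : ℕ) : ℤ)) ↔ (k ≤ R j ω) := by omega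
      simp only [hX, Set.indicator_apply]
      rw [if_congr hcond rfl rfl]
      rfl
    rw [this]
  -- integrability
  have hint : ∀ j ∈ Finset.univ, Integrable (fun ω => Real.exp (t * X j ω)) ℙ :=
    fun j _ => ind_integrable (hAm j) t
  have hintsum : Integrable (fun ω => Real.exp (t * (∑ j, X j) ω)) ℙ := by
    have := ProbabilityTheory.iIndepFun.integrable_exp_mul_sum hXindep hXmeas
      (s := Finset.univ) hint
    simpa using this
  -- Chernoff
  have hcher := measure_le_le_exp_mul_mgf (μ := ℙ) (X := ∑ j, X j) M htle hintsum
  have hmgf : mgf (∑ j, X j) ℙ t = (1 - p/2) ^ d := by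
    rw [hXindep.mgf_sum hXmeas]
    have : ∀ j, mgf (X j) ℙ t = 1 - p/2 := by
      intro j
      rw [hX]
      rw [ind_mgf (hAm j) t, hAPr j, hexpt]
      ring
    rw [Finset.prod_congr rfl (fun j _ => this j), Finset.prod_const]
    simp
  rw [hmgf] at hcher
  -- real-number estimate
  have hpd : 2 * M ≤ p * d := by
    have hpow : (2:ℝ) ^ (ℓ - 1) = 2 ^ (k + 1) := by
      rw [show ℓ - 1 = ((k + 1 : ℕ) : ℤ) by omega, zpow_natCast]
    rw [hpow] at hℓ₁
    have := mul_le_mul_of_nonneg_left hℓ₁ hp0.le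
    have hpp : p * (M * 2 ^ (k+1)) = 2 * M := by
      rw [hp, pow_succ]
      rw [show (1/2:ℝ)^k * (M * ((2:ℝ)^k * 2)) = M * 2 * ((1/2 * 2:ℝ))^k by rw [mul_pow]; ring]
      norm_num
      ring
    linarith [hpp ▸ this]
  have hbound : Real.exp (-t * M) * (1 - p/2) ^ d < 1/8 * Real.exp (-C) := by
    have h1 : (1 - p/2) ^ d ≤ Real.exp (-(p/2)) ^ d :=
      pow_le_pow_left₀ (by linarith) (by linarith [Real.add_one_le_exp (-(p/2))]) d
    have h2 : Real.exp (-(p/2)) ^ d = Real.exp (-(p/2) * d) := by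
      rw [← Real.exp_nat_mul]; ring_nf
    have h3 : Real.exp (-(p/2) * d) ≤ Real.exp (-M) := by
      apply Real.exp_le_exp.mpr; nlinarith
    have h4 : Real.exp (-t * M) * (1 - p/2) ^ d ≤ Real.exp (Real.log 2 * M) * Real.exp (-M) := by
      rw [ht]
      have hnn : (0:ℝ) ≤ Real.exp (-(-Real.log 2) * M) := (Real.exp_pos _).le
      calc Real.exp (-(-Real.log 2) * M) * (1 - p/2) ^ d
          ≤ Real.exp (-(-Real.log 2) * M) * Real.exp (-M) := by
            apply mul_le_mul_of_nonneg_left _ hnn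
            calc (1 - p/2) ^ d ≤ Real.exp (-(p/2)) ^ d := h1
              _ = Real.exp (-(p/2) * d) := h2
              _ ≤ Real.exp (-M) := h3
        _ = Real.exp (Real.log 2 * M) * Real.exp (-M) := by ring_nf
    have h5 : Real.exp (Real.log 2 * M) * Real.exp (-M) < 1/8 * Real.exp (-C) := by
      rw [← Real.exp_add, show (1/8 : ℝ) = Real.exp (-Real.log 8) by
        rw [Real.exp_neg, Real.exp_log (by norm_num)]; norm_num, ← Real.exp_add]
      apply Real.exp_lt_exp.mpr
      nlinarith
    linarith
  -- conclude in ENNReal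
  rw [hset]
  have hne : ℙ {ω | (∑ j, X j) ω ≤ M} ≠ ⊤ := measure_ne_top _ _
  rw [ENNReal.lt_ofReal_iff_toReal_lt hne]
  exact lt_of_le_of_lt hcher hbound
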